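/- arXiv:2005.09603 — 2 statements merged into one kernel-verified Lean document; each statement's English description precedes it below -/
import Mathlib

section
/- Let λ, μ, ν, ϑ, α, β be real numbers satisfying ϑ² + λϑ = μ²/4, α + β = 2ϑ + λ + 1/2, and αβ = ϑ² + ϑ/2 + λϑ − ν(ν+1)/4. Suppose M : ℝ → ℝ is twice differentiable on (0,1) and satisfies the Gaussian hypergeometric differential equation with parameters α, β and lower parameter γ = 1/2, i.e. z(1−z)·M''(z) + [1/2 − (α+β+1)z]·M'(z) − αβ·M(z) = 0 for all z ∈ (0,1). Then the function H(x) := (1−x²)^ϑ · M(x²) satisfies the hyperspherical associated Legendre differential equation of degree ν, order μ and dimension λ, namely (1−x²)·H''(x) − 2(1+λ)x·H'(x) + [ν(ν+1) − μ²/(1−x²)]·H(x) = 0, for all x ∈ (−1,1) with x ≠ 0. -/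
/-- the substitution `H x = (1 - x²)^ϑ · M (x²)` turns a solution `M` of the
Gaussian hypergeometric equation with lower parameter `1/2` (with the stated parameter
relations) into a solution of the hyperspherical associated Legendre equation. -/
theorem hypergeometric_to_hyperspherical_associated_legendre
    (lam mu nu th a b : ℝ)
    (hth : th ^ 2 + lam * th = mu ^ 2 / 4)
    (hsum : a + b = 2 * th + lam + 1 / 2)
    (hprod : a * b = th ^ 2 + th / 2 + lam * th - nu * (nu + 1) / 4)
    (M : ℝ → ℝ)
    (hM : ∀ z ∈ Set.Ioo (0 : ℝ) 1, DifferentiableAt ℝ M z)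
    (hM' : ∀ z ∈ Set.Ioo (0 : ℝ) 1, DifferentiableAt ℝ (deriv M) z)
    (hode : ∀ z ∈ Set.Ioo (0 : ℝ) 1,
      z * (1 - z) * deriv (deriv M) z + (1 / 2 - (a + b + 1) * z) * deriv M z
        - a * b * M z = 0)
    (H : ℝ → ℝ) (hH : ∀ x, H x = (1 - x ^ 2) ^ th * M (x ^ 2)) :
    ∀ x ∈ Set.Ioo (-1 : ℝ) 1, x ≠ 0 →
      (1 - x ^ 2) * deriv (deriv H) x - 2 * (1 + lam) * x * deriv H x
        + (nu * (nu + 1) - mu ^ 2 / (1 - x ^ 2)) * H x = 0 := by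
  have hHeq : H = fun y => (1 - y ^ 2) ^ th * M (y ^ 2) := funext hH
  -- first derivative of H on the punctured interval
  have key : ∀ y : ℝ, y ∈ Set.Ioo (-1 : ℝ) 1 → y ≠ 0 →
      HasDerivAt H (th * (1 - y ^ 2) ^ (th - 1) * (-(2 * y)) * M (y ^ 2)
        + (1 - y ^ 2) ^ th * (deriv M (y ^ 2) * (2 * y))) y := by
    intro y hy hy0
    have hwy : (0 : ℝ) < 1 - y ^ 2 := by nlinarith [hy.1, hy.2]
    have hzy : y ^ 2 ∈ Set.Ioo (0 : ℝ) 1 := by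
      constructor
      · positivity
      · nlinarith [hy.1, hy.2]
    have h1 : HasDerivAt (fun t : ℝ => 1 - t ^ 2) (-(2 * y)) y := by
      simpa using ((hasDerivAt_pow 2 y).const_sub 1)
    have h2 : HasDerivAt (fun t : ℝ => t ^ th) (th * (1 - y ^ 2) ^ (th - 1)) (1 - y ^ 2) :=
      Real.hasDerivAt_rpow_const (Or.inl hwy.ne')
    have h3 : HasDerivAt (fun t : ℝ => (1 - t ^ 2) ^ th)
        (th * (1 - y ^ 2) ^ (th - 1) * (-(2 * y))) y := by have := h2.comp y h1; exact this
    have h4 : HasDerivAt (fun t : ℝ => t ^ 2) (2 * y) y := by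
      simpa using hasDerivAt_pow 2 y
    have h5 : HasDerivAt (fun t : ℝ => M (t ^ 2)) (deriv M (y ^ 2) * (2 * y)) y := by
      simpa [Function.comp_def] using HasDerivAt.comp (h := fun t : ℝ => t ^ 2) y ((hM _ hzy).hasDerivAt) h4
    rw [hHeq]
    exact h3.mul h5
  intro x hx hx0
  obtain ⟨hx1, hx2⟩ := hx
  have hw : (0 : ℝ) < 1 - x ^ 2 := by nlinarith
  have hz : x ^ 2 ∈ Set.Ioo (0 : ℝ) 1 := by
    constructor
    · positivity
    · nlinarith
  -- deriv H agrees with the explicit formula near x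
  have hsopen : IsOpen (Set.Ioo (-1 : ℝ) 1 \ {0}) := isOpen_Ioo.sdiff isClosed_singleton
  have hxs : x ∈ Set.Ioo (-1 : ℝ) 1 \ {0} := ⟨⟨hx1, hx2⟩, hx0⟩
  have hev : deriv H =ᶠ[nhds x] fun y =>
      th * (1 - y ^ 2) ^ (th - 1) * (-(2 * y)) * M (y ^ 2)
        + (1 - y ^ 2) ^ th * (deriv M (y ^ 2) * (2 * y)) := by
    filter_upwards [hsopen.mem_nhds hxs] with y hy
    exact (key y hy.1 hy.2).deriv
  -- pieces for the second derivative
  have h1 : HasDerivAt (fun t : ℝ => 1 - t ^ 2) (-(2 * x)) x := by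
    simpa using ((hasDerivAt_pow 2 x).const_sub 1)
  have h2 : HasDerivAt (fun t : ℝ => t ^ th) (th * (1 - x ^ 2) ^ (th - 1)) (1 - x ^ 2) :=
    Real.hasDerivAt_rpow_const (Or.inl hw.ne')
  have h3 : HasDerivAt (fun t : ℝ => (1 - t ^ 2) ^ th)
      (th * (1 - x ^ 2) ^ (th - 1) * (-(2 * x))) x := by have := h2.comp x h1; exact this
  have h2' : HasDerivAt (fun t : ℝ => t ^ (th - 1))
      ((th - 1) * (1 - x ^ 2) ^ (th - 1 - 1)) (1 - x ^ 2) :=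
    Real.hasDerivAt_rpow_const (Or.inl hw.ne')
  have h3' : HasDerivAt (fun t : ℝ => (1 - t ^ 2) ^ (th - 1))
      ((th - 1) * (1 - x ^ 2) ^ (th - 1 - 1) * (-(2 * x))) x := by have := h2'.comp x h1; exact this
  have h4 : HasDerivAt (fun t : ℝ => t ^ 2) (2 * x) x := by
    simpa using hasDerivAt_pow 2 x
  have h5 : HasDerivAt (fun t : ℝ => M (t ^ 2)) (deriv M (x ^ 2) * (2 * x)) x := by
    simpa [Function.comp_def] using HasDerivAt.comp (h := fun t : ℝ => t ^ 2) x ((hM _ hz).hasDerivAt) h4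
  have h5' : HasDerivAt (fun t : ℝ => deriv M (t ^ 2))
      (deriv (deriv M) (x ^ 2) * (2 * x)) x := by
    simpa [Function.comp_def] using HasDerivAt.comp (h := fun t : ℝ => t ^ 2) x ((hM' _ hz).hasDerivAt) h4
  have hneg : HasDerivAt (fun t : ℝ => -(2 * t)) (-2) x := by
    simpa [Pi.neg_def] using ((hasDerivAt_id x).const_mul (2:ℝ)).neg
  have h2y : HasDerivAt (fun t : ℝ => 2 * t) (2 : ℝ) x := by
    simpa using (hasDerivAt_id x).const_mul (2:ℝ)
  have hA : HasDerivAt (fun y : ℝ => th * (1 - y ^ 2) ^ (th - 1) * (-(2 * y)))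
      (th * ((th - 1) * (1 - x ^ 2) ^ (th - 1 - 1) * (-(2 * x))) * (-(2 * x))
        + th * (1 - x ^ 2) ^ (th - 1) * (-2)) x := by
    simpa [mul_assoc, Pi.mul_def] using (h3'.const_mul th).mul hneg
  have hC : HasDerivAt (fun y : ℝ => deriv M (y ^ 2) * (2 * y))
      (deriv (deriv M) (x ^ 2) * (2 * x) * (2 * x) + deriv M (x ^ 2) * 2) x :=
    h5'.mul h2y
  have hF : HasDerivAt (fun y : ℝ =>
      th * (1 - y ^ 2) ^ (th - 1) * (-(2 * y)) * M (y ^ 2)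
        + (1 - y ^ 2) ^ th * (deriv M (y ^ 2) * (2 * y)))
      ((th * ((th - 1) * (1 - x ^ 2) ^ (th - 1 - 1) * (-(2 * x))) * (-(2 * x))
          + th * (1 - x ^ 2) ^ (th - 1) * (-2)) * M (x ^ 2)
        + th * (1 - x ^ 2) ^ (th - 1) * (-(2 * x)) * (deriv M (x ^ 2) * (2 * x))
        + (th * (1 - x ^ 2) ^ (th - 1) * (-(2 * x)) * (deriv M (x ^ 2) * (2 * x))
          + (1 - x ^ 2) ^ th
            * (deriv (deriv M) (x ^ 2) * (2 * x) * (2 * x) + deriv M (x ^ 2) * 2))) x := by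
    exact (hA.mul h5).add (h3.mul hC)
  have hd1 : deriv H x = th * (1 - x ^ 2) ^ (th - 1) * (-(2 * x)) * M (x ^ 2)
      + (1 - x ^ 2) ^ th * (deriv M (x ^ 2) * (2 * x)) := (key x ⟨hx1, hx2⟩ hx0).deriv
  have hd2 : deriv (deriv H) x
      = (th * ((th - 1) * (1 - x ^ 2) ^ (th - 1 - 1) * (-(2 * x))) * (-(2 * x))
          + th * (1 - x ^ 2) ^ (th - 1) * (-2)) * M (x ^ 2)
        + th * (1 - x ^ 2) ^ (th - 1) * (-(2 * x)) * (deriv M (x ^ 2) * (2 * x))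
        + (th * (1 - x ^ 2) ^ (th - 1) * (-(2 * x)) * (deriv M (x ^ 2) * (2 * x))
          + (1 - x ^ 2) ^ th
            * (deriv (deriv M) (x ^ 2) * (2 * x) * (2 * x) + deriv M (x ^ 2) * 2)) := by
    rw [hev.deriv_eq]
    exact hF.deriv
  -- express the rpow powers in terms of the lowest one
  have hc1 : (1 - x ^ 2) ^ (th - 1) = (1 - x ^ 2) * (1 - x ^ 2) ^ (th - 1 - 1) := by
    have h := Real.rpow_add hw 1 (th - 1 - 1)
    rw [show (1 : ℝ) + (th - 1 - 1) = th - 1 by ring, Real.rpow_one] at h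
    exact h
  have hc0 : (1 - x ^ 2) ^ th = (1 - x ^ 2) ^ 2 * (1 - x ^ 2) ^ (th - 1 - 1) := by
    have h := Real.rpow_add hw 2 (th - 1 - 1)
    rw [show (2 : ℝ) + (th - 1 - 1) = th by ring,
      show ((2 : ℝ)) = ((2 : ℕ) : ℝ) by norm_num, Real.rpow_natCast] at h
    exact h
  have hodeX := hode (x ^ 2) hz
  have key2 : (nu * (nu + 1) - mu ^ 2 / (1 - x ^ 2)) * ((1 - x ^ 2) ^ th * M (x ^ 2))
      = (nu * (nu + 1) * (1 - x ^ 2) - mu ^ 2)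
        * ((1 - x ^ 2) * (1 - x ^ 2) ^ (th - 1 - 1) * M (x ^ 2)) := by
    rw [hc0]
    field_simp
  rw [hd1, hd2, hH, key2, hc1, hc0]
  linear_combination (4 * (1 - x ^ 2) ^ (th - 1 - 1) * (1 - x ^ 2) ^ 2) * hodeX
    + (4 * (1 - x ^ 2) ^ (th - 1 - 1) * (1 - x ^ 2) ^ 2 * x ^ 2 * deriv M (x ^ 2)) * hsum
    + (4 * (1 - x ^ 2) ^ (th - 1 - 1) * (1 - x ^ 2) * M (x ^ 2)) * hth
    + (4 * (1 - x ^ 2) ^ (th - 1 - 1) * (1 - x ^ 2) ^ 2 * M (x ^ 2)) * hprod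
end

section
/- Let λ, μ, ν be real numbers and suppose J : ℝ → ℝ is twice differentiable on (−1,1) and satisfies (1−x²)·J''(x) + 2[μ − (1+λ)x]·J'(x) + [ν(ν+1) − 2λμx/(1−x²)]·J(x) = 0 for all x ∈ (−1,1). Then the function H(x) := ((1+x)/(1−x))^{μ/2} · J(x) satisfies the hyperspherical associated Legendre differential equation of degree ν, order μ and dimension λ, namely (1−x²)·H''(x) − 2(1+λ)x·H'(x) + [ν(ν+1) − μ²/(1−x²)]·H(x) = 0, for all x ∈ (−1,1). -/
/-- the substitution `H x = ((1+x)/(1−x))^{μ/2} · J x` turns a solution `J` of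
`(1−x²)J'' + 2[μ − (1+λ)x]J' + [ν(ν+1) − 2λμx/(1−x²)]J = 0` on `(−1,1)` into a solution of
the hyperspherical associated Legendre equation on `(−1,1)`. -/
theorem power_factor_to_hyperspherical_associated_legendre
    (lam mu nu : ℝ)
    (J : ℝ → ℝ)
    (hJ : ∀ x ∈ Set.Ioo (-1 : ℝ) 1, DifferentiableAt ℝ J x)
    (hJ' : ∀ x ∈ Set.Ioo (-1 : ℝ) 1, DifferentiableAt ℝ (deriv J) x)
    (hode : ∀ x ∈ Set.Ioo (-1 : ℝ) 1,
      (1 - x ^ 2) * deriv (deriv J) x + 2 * (mu - (1 + lam) * x) * deriv J x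
        + (nu * (nu + 1) - 2 * lam * mu * x / (1 - x ^ 2)) * J x = 0)
    (H : ℝ → ℝ)
    (hH : ∀ x, H x = ((1 + x) / (1 - x)) ^ (mu / 2) * J x) :
    ∀ x ∈ Set.Ioo (-1 : ℝ) 1,
      (1 - x ^ 2) * deriv (deriv H) x - 2 * (1 + lam) * x * deriv H x
        + (nu * (nu + 1) - mu ^ 2 / (1 - x ^ 2)) * H x = 0 := by
  set W : ℝ → ℝ := fun t => ((1 + t) / (1 - t)) ^ (mu / 2) with hW
  have hHfun : H = fun t => W t * J t := funext fun t => hH t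
  -- derivative of the weight on the interval
  have hw : ∀ y ∈ Set.Ioo (-1 : ℝ) 1,
      HasDerivAt W (W y * (mu / (1 - y ^ 2))) y := by
    intro y hy
    obtain ⟨hy1, hy2⟩ := hy
    have h1 : (0:ℝ) < 1 + y := by linarith
    have h2 : (0:ℝ) < 1 - y := by linarith
    have hg : HasDerivAt (fun t : ℝ => (1 + t) / (1 - t)) (2 / (1 - y) ^ 2) y := by
      have hnum : HasDerivAt (fun t : ℝ => 1 + t) 1 y := by
        simpa using (hasDerivAt_id y).const_add 1
      have hden : HasDerivAt (fun t : ℝ => 1 - t) (-1) y := by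
        simpa using (hasDerivAt_id y).const_sub 1
      have : HasDerivAt (fun t : ℝ => (1 + t) / (1 - t)) ((1 * (1 - y) - (1 + y) * -1) / (1 - y) ^ 2) y :=
        hnum.div hden h2.ne'
      convert this using 1
      ring
    have hpos : (0:ℝ) < (1 + y) / (1 - y) := div_pos h1 h2
    have h := hg.rpow_const (p := mu / 2) (Or.inl hpos.ne')
    convert h using 1
    have hsub : ((1 + y) / (1 - y)) ^ (mu / 2 - 1)
        = ((1 + y) / (1 - y)) ^ (mu / 2) / ((1 + y) / (1 - y)) := by
      rw [Real.rpow_sub hpos, Real.rpow_one]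
    rw [hsub, show ((1 + y) / (1 - y)) ^ (mu / 2) = W y from rfl]
    generalize W y = w
    have hq : (0:ℝ) < 1 - y ^ 2 := by nlinarith
    field_simp [hq.ne']
    ring
  -- derivative of H on the interval
  have hHd : ∀ y ∈ Set.Ioo (-1 : ℝ) 1,
      HasDerivAt H (W y * (mu / (1 - y ^ 2) * J y + deriv J y)) y := by
    intro y hy
    have := (hw y hy).mul (hJ y hy).hasDerivAt
    replace this : HasDerivAt H (W y * (mu / (1 - y ^ 2)) * J y + W y * deriv J y) y := by
      rw [hHfun]; exact this
    convert this using 1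
    ring
  intro x hx
  obtain ⟨hx1, hx2⟩ := hx
  have hxmem : x ∈ Set.Ioo (-1 : ℝ) 1 := ⟨hx1, hx2⟩
  have h1 : (0:ℝ) < 1 + x := by linarith
  have h2 : (0:ℝ) < 1 - x := by linarith
  have hq : (0:ℝ) < 1 - x ^ 2 := by nlinarith
  -- first derivative value
  have hd1 : deriv H x = W x * (mu / (1 - x ^ 2) * J x + deriv J x) :=
    (hHd x hxmem).deriv
  -- deriv H agrees with the explicit formula near x
  have hEq : deriv H =ᶠ[nhds x]
      (fun y => W y * (mu / (1 - y ^ 2) * J y + deriv J y)) := by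
    filter_upwards [isOpen_Ioo.mem_nhds hxmem] with y hy
    exact (hHd y hy).deriv
  -- derivative of the inner factor
  have hGd : HasDerivAt (fun y => mu / (1 - y ^ 2) * J y + deriv J y)
      (mu * (2 * x) / (1 - x ^ 2) ^ 2 * J x + mu / (1 - x ^ 2) * deriv J x
        + deriv (deriv J) x) x := by
    have hden : HasDerivAt (fun y : ℝ => 1 - y ^ 2) (-(2 * x)) x := by
      simpa using ((hasDerivAt_pow 2 x).const_sub 1)
    have hc : HasDerivAt (fun y : ℝ => mu / (1 - y ^ 2))
        (mu * (2 * x) / (1 - x ^ 2) ^ 2) x := by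
      have : HasDerivAt (fun y : ℝ => mu / (1 - y ^ 2)) ((0 * (1 - x ^ 2) - mu * -(2 * x)) / (1 - x ^ 2) ^ 2) x :=
        (hasDerivAt_const x mu).div hden hq.ne'
      convert this using 1
      ring
    exact (hc.mul (hJ x hxmem).hasDerivAt).add (hJ' x hxmem).hasDerivAt
  have hFd : HasDerivAt (fun y => W y * (mu / (1 - y ^ 2) * J y + deriv J y))
      (W x * (mu / (1 - x ^ 2)) * (mu / (1 - x ^ 2) * J x + deriv J x)
        + W x * (mu * (2 * x) / (1 - x ^ 2) ^ 2 * J x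
          + mu / (1 - x ^ 2) * deriv J x + deriv (deriv J) x)) x :=
    (hw x hxmem).mul hGd
  have hd2 : deriv (deriv H) x
      = W x * (mu / (1 - x ^ 2)) * (mu / (1 - x ^ 2) * J x + deriv J x)
        + W x * (mu * (2 * x) / (1 - x ^ 2) ^ 2 * J x
          + mu / (1 - x ^ 2) * deriv J x + deriv (deriv J) x) := by
    rw [hEq.deriv_eq]
    exact hFd.deriv
  have h0 := hode x hxmem
  rw [hd2, hd1, hH x]
  have key : (1 - x ^ 2) *
        (W x * (mu / (1 - x ^ 2)) * (mu / (1 - x ^ 2) * J x + deriv J x)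
          + W x * (mu * (2 * x) / (1 - x ^ 2) ^ 2 * J x
            + mu / (1 - x ^ 2) * deriv J x + deriv (deriv J) x))
      - 2 * (1 + lam) * x * (W x * (mu / (1 - x ^ 2) * J x + deriv J x))
      + (nu * (nu + 1) - mu ^ 2 / (1 - x ^ 2)) * (((1 + x) / (1 - x)) ^ (mu / 2) * J x)
      = W x * ((1 - x ^ 2) * deriv (deriv J) x + 2 * (mu - (1 + lam) * x) * deriv J x
          + (nu * (nu + 1) - 2 * lam * mu * x / (1 - x ^ 2)) * J x) := by
    rw [hW]
    field_simp
    ring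
  rw [key, h0, mul_zero]
end
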